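/- Let A be a complex semisimple unital Banach algebra with nonzero socle, equipped with the trace Tr on Soc(A). Let f : ℂ → A be given by f(λ) = (1-λ)p + λ r, where p and r are rank one idempotents with r ∈ Ap (so f(λ) ∈ Ap for all λ). Then the set D = { λ ∈ ℂ : σ(f(λ)) = {0} or σ(f(λ)) is a single point } equals { λ : Tr(f(λ)) = 0 }, and on ℂ \ D the map g(λ) = f(λ)/Tr(f(λ)) is an analytic path of rank one idempotents connecting p and r. -/

import Mathlib

noncomputable section

lemma aux_spec {A : Type*} [NormedRing A] [NormedAlgebra ℂ A] (a : A) (s : ℂ)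
    (h : a * a = s • a) : spectrum ℂ a ⊆ {0, s} := by
  intro μ hμ
  by_contra hne
  simp only [Set.mem_insert_iff, Set.mem_singleton_iff, not_or] at hne
  obtain ⟨h0, hs⟩ := hne
  rw [spectrum.mem_iff] at hμ
  apply hμ
  have hc : μ * (μ - s) ≠ 0 := mul_ne_zero h0 (sub_ne_zero.mpr hs)
  have key : (algebraMap ℂ A μ - a) * ((μ - s) • (1:A) + a) = (μ * (μ - s)) • 1 := by
    simp only [Algebra.algebraMap_eq_smul_one, sub_mul, mul_add, smul_mul_assoc,
      mul_smul_comm, one_mul, mul_one, h]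
    module
  have key2 : ((μ - s) • (1:A) + a) * (algebraMap ℂ A μ - a) = (μ * (μ - s)) • 1 := by
    simp only [Algebra.algebraMap_eq_smul_one, mul_sub, add_mul, smul_mul_assoc,
      mul_smul_comm, one_mul, mul_one, h]
    module
  refine ⟨⟨algebraMap ℂ A μ - a, (μ * (μ - s))⁻¹ • ((μ - s) • (1:A) + a), ?_, ?_⟩, rfl⟩
  · rw [mul_smul_comm, key, smul_smul, inv_mul_cancel₀ hc, one_smul]
  · rw [smul_mul_assoc, key2, smul_smul, inv_mul_cancel₀ hc, one_smul]

/-- A nonzero idempotent has `1` in its spectrum. -/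
lemma aux_one_mem {A : Type*} [NormedRing A] [NormedAlgebra ℂ A] {q : A}
    (hq : IsIdempotentElem q) (hq0 : q ≠ 0) : (1 : ℂ) ∈ spectrum ℂ q := by
  rw [spectrum.mem_iff]
  intro hu
  apply hq0
  obtain ⟨u, hu⟩ := hu
  have h1 : ((algebraMap ℂ A 1 - q) * q) = 0 := by
    simp [sub_mul, Algebra.algebraMap_eq_smul_one, hq.eq]
  have := congrArg (· * q) hu
  calc q = 1 * q := (one_mul q).symm
    _ = (↑u⁻¹ * ↑u) * q := by rw [u.inv_mul]
    _ = ↑u⁻¹ * ((algebraMap ℂ A 1 - q) * q) := by rw [mul_assoc, hu]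
    _ = 0 := by rw [h1, mul_zero]

/-- `rank a ≤ n`: for every `x`, the nonzero spectrum of `x * a` is finite with at most
`n` elements. -/
def rankLE {A : Type*} [NormedRing A] [NormedAlgebra ℂ A] (a : A) (n : ℕ) : Prop :=
  ∀ x : A, (spectrum ℂ (x * a) \ {0}).Finite ∧ (spectrum ℂ (x * a) \ {0}).ncard ≤ n

/-- `rank a = n`. -/
def hasRank {A : Type*} [NormedRing A] [NormedAlgebra ℂ A] (a : A) (n : ℕ) : Prop :=
  rankLE a n ∧ ∃ x : A, (spectrum ℂ (x * a) \ {0}).ncard = n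

/-- For `f(λ) = (1-λ)p + λr` with `p, r` rank one idempotents and `r ∈ Ap`, the set `D` of
`λ` for which `σ(f(λ))` is a single point is `{λ : Tr(f(λ)) = 0}`, and on its complement
`g(λ) = f(λ)/Tr(f(λ))` is an analytic path of rank one idempotents joining `p` to `r`. -/
theorem path_of_rank_one_idempotents {A : Type*} [NormedRing A] [NormedAlgebra ℂ A]
    [CompleteSpace A]
    (hss : ∀ a : A, (∀ x : A, spectrum ℂ (a * x) ⊆ {0}) → a = 0)
    (p r : A) (hp : IsIdempotentElem p) (hr : IsIdempotentElem r)
    (hp1 : hasRank p 1) (hr1 : hasRank r 1)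
    (hpni : ¬ IsUnit p)
    (hrAp : ∃ z : A, r = z * p)
    (Tr : A →ₗ[ℂ] ℂ)
    (hTr : ∀ a : A, (∃ z : A, a = z * p) → a * a = Tr a • a)
    (f : ℂ → A) (hf : ∀ lam : ℂ, f lam = (1 - lam) • p + lam • r)
    (g : ℂ → A) (hg : ∀ lam : ℂ, g lam = (Tr (f lam))⁻¹ • f lam) :
    {lam : ℂ | (spectrum ℂ (f lam)).Subsingleton} = {lam : ℂ | Tr (f lam) = 0} ∧
    DifferentiableOn ℂ g {lam : ℂ | Tr (f lam) ≠ 0} ∧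
    (∀ lam : ℂ, Tr (f lam) ≠ 0 → IsIdempotentElem (g lam) ∧ hasRank (g lam) 1) ∧
    Tr (f 0) ≠ 0 ∧ Tr (f 1) ≠ 0 ∧ g 0 = p ∧ g 1 = r := by
  obtain ⟨zr, hzr⟩ := hrAp
  -- any left multiple of p that is a unit forces p to be a unit
  have hnu : ∀ z : A, ¬ IsUnit (z * p) := by
    intro z hzu
    apply hpni
    obtain ⟨u, hu⟩ := hzu
    have h1 : (↑u⁻¹ * z) * p = 1 := by rw [mul_assoc, ← hu, u.inv_mul]
    have hp1' : p = 1 := by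
      calc p = 1 * p := (one_mul p).symm
        _ = ((↑u⁻¹ * z) * p) * p := by rw [h1]
        _ = (↑u⁻¹ * z) * (p * p) := by rw [mul_assoc]
        _ = (↑u⁻¹ * z) * p := by rw [hp.eq]
        _ = 1 := h1
    rw [hp1']; exact isUnit_one
  -- f lam ∈ Ap
  have hfz : ∀ lam : ℂ, f lam = ((1 - lam) • p + lam • zr) * p := by
    intro lam
    rw [hf lam, hzr, add_mul, smul_mul_assoc, smul_mul_assoc, hp.eq]
  have hTf : ∀ lam : ℂ, f lam * f lam = Tr (f lam) • f lam :=
    fun lam => hTr _ ⟨_, hfz lam⟩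
  -- p and r are nonzero
  have hpne : p ≠ 0 := by
    intro h
    obtain ⟨x, hx⟩ := hp1.2
    rw [h, mul_zero] at hx
    have : spectrum ℂ (0 : A) \ {0} = ∅ := by
      have h0 := aux_spec (0 : A) 0 (by simp)
      rw [Set.pair_eq_singleton] at h0
      rw [Set.diff_eq_empty]
      simpa using h0
    rw [this] at hx
    simp at hx
  have hrne : r ≠ 0 := by
    intro h
    obtain ⟨x, hx⟩ := hr1.2
    rw [h, mul_zero] at hx
    have : spectrum ℂ (0 : A) \ {0} = ∅ := by
      have h0 := aux_spec (0 : A) 0 (by simp)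
      rw [Set.pair_eq_singleton] at h0
      rw [Set.diff_eq_empty]
      simpa using h0
    rw [this] at hx
    simp at hx
  have hf0 : f 0 = p := by rw [hf]; simp
  have hf1 : f 1 = r := by rw [hf]; simp
  -- Tr p = 1, Tr r = 1
  have hTrp : Tr p = 1 := by
    have h1 : p * p = Tr p • p := hTr p ⟨p, hp.eq.symm⟩
    rw [hp.eq] at h1
    have : (Tr p - 1) • p = 0 := by rw [sub_smul, one_smul, ← h1, sub_self]
    rcases smul_eq_zero.mp this with h | h
    · exact sub_eq_zero.mp h
    · exact absurd h hpne
  have hTrr : Tr r = 1 := by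
    have h1 : r * r = Tr r • r := hTr r ⟨zr, hzr⟩
    rw [hr.eq] at h1
    have : (Tr r - 1) • r = 0 := by rw [sub_smul, one_smul, ← h1, sub_self]
    rcases smul_eq_zero.mp this with h | h
    · exact sub_eq_zero.mp h
    · exact absurd h hrne
  have hTf0 : Tr (f 0) = 1 := by rw [hf0, hTrp]
  have hTf1 : Tr (f 1) = 1 := by rw [hf1, hTrr]
  -- f lam ≠ 0 when Tr (f lam) ≠ 0
  have hfne : ∀ lam : ℂ, Tr (f lam) ≠ 0 → f lam ≠ 0 := by
    intro lam ht h
    apply ht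
    rw [h, map_zero]
  -- first part : set equality
  have part1 : {lam : ℂ | (spectrum ℂ (f lam)).Subsingleton} = {lam : ℂ | Tr (f lam) = 0} := by
    ext lam
    simp only [Set.mem_setOf_eq]
    constructor
    · intro hsub
      by_contra ht
      -- 0 ∈ σ(f lam)
      have h0 : (0 : ℂ) ∈ spectrum ℂ (f lam) := by
        rw [spectrum.zero_mem_iff]
        rw [hfz lam]
        exact hnu _
      -- Tr (f lam) ∈ σ(f lam)
      have hte : Tr (f lam) ∈ spectrum ℂ (f lam) := by
        rw [spectrum.mem_iff]
        intro hu
        obtain ⟨u, hu⟩ := hu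
        have hz : (algebraMap ℂ A (Tr (f lam)) - f lam) * f lam = 0 := by
          rw [sub_mul, Algebra.algebraMap_eq_smul_one, smul_mul_assoc, one_mul,
            hTf lam, sub_self]
        have : f lam = 0 := by
          calc f lam = 1 * f lam := (one_mul _).symm
            _ = (↑u⁻¹ * ↑u) * f lam := by rw [u.inv_mul]
            _ = ↑u⁻¹ * ((algebraMap ℂ A (Tr (f lam)) - f lam) * f lam) := by
                rw [mul_assoc, hu]
            _ = 0 := by rw [hz, mul_zero]
        exact hfne lam ht this
      exact ht (hsub hte h0)
    · intro ht
      have h := aux_spec (f lam) (Tr (f lam)) (hTf lam)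
      rw [ht] at h
      rw [Set.pair_eq_singleton] at h
      intro x hx y hy
      have hx' := h hx
      have hy' := h hy
      simp only [Set.mem_insert_iff, Set.mem_singleton_iff, or_self] at hx' hy'
      rw [hx', hy']
  -- idempotency and rank
  have part3 : ∀ lam : ℂ, Tr (f lam) ≠ 0 → IsIdempotentElem (g lam) ∧ hasRank (g lam) 1 := by
    intro lam ht
    have hgid : IsIdempotentElem (g lam) := by
      unfold IsIdempotentElem
      rw [hg lam, smul_mul_smul_comm, hTf lam, smul_smul, mul_assoc,
        inv_mul_cancel₀ ht, mul_one]
    refine ⟨hgid, ?_, ?_⟩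
    · -- rankLE
      intro x
      have hxz : ∃ z : A, x * g lam = z * p := by
        refine ⟨(Tr (f lam))⁻¹ • (x * ((1 - lam) • p + lam • zr)), ?_⟩
        rw [hg lam, mul_smul_comm, hfz lam, smul_mul_assoc, mul_assoc]
      have hsq := hTr _ hxz
      have hsub := aux_spec _ _ hsq
      have hssub : spectrum ℂ (x * g lam) \ {0} ⊆ {Tr (x * g lam)} := by
        intro μ ⟨hμ, hμ0⟩
        rcases Set.mem_insert_iff.mp (hsub hμ) with h | h
        · exact absurd h hμ0
        · exact h
      exact ⟨Set.Finite.subset (Set.finite_singleton _) hssub,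
        le_trans (Set.ncard_le_ncard hssub (Set.finite_singleton _)) (by simp)⟩
    · -- witness
      refine ⟨1, ?_⟩
      rw [one_mul]
      have hgne : g lam ≠ 0 := by
        rw [hg lam]
        exact smul_ne_zero (inv_ne_zero ht) (hfne lam ht)
      have h1mem : (1 : ℂ) ∈ spectrum ℂ (g lam) := aux_one_mem hgid hgne
      have hsub := aux_spec (g lam) 1 (by rw [hgid.eq, one_smul])
      have : spectrum ℂ (g lam) \ {0} = {1} := by
        apply Set.Subset.antisymm
        · intro μ ⟨hμ, hμ0⟩
          rcases Set.mem_insert_iff.mp (hsub hμ) with h | h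
          · exact absurd h hμ0
          · exact h
        · intro μ hμ
          simp only [Set.mem_singleton_iff] at hμ
          subst hμ
          exact ⟨h1mem, by norm_num⟩
      rw [this, Set.ncard_singleton]
  -- differentiability
  have part2 : DifferentiableOn ℂ g {lam : ℂ | Tr (f lam) ≠ 0} := by
    have hgdef : g = fun lam => ((1 - lam) * Tr p + lam * Tr r)⁻¹ • ((1 - lam) • p + lam • r) := by
      funext lam
      rw [hg lam, hf lam]
      congr 1
      rw [map_add, map_smul, map_smul, smul_eq_mul, smul_eq_mul]
    have hset : {lam : ℂ | Tr (f lam) ≠ 0} = {lam : ℂ | (1 - lam) * Tr p + lam * Tr r ≠ 0} := by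
      ext lam
      simp only [Set.mem_setOf_eq, hf lam, map_add, map_smul, smul_eq_mul]
    rw [hgdef, hset]
    apply DifferentiableOn.fun_smul
    · apply DifferentiableOn.fun_inv
      · apply Differentiable.differentiableOn
        fun_prop
      · intro x hx
        exact hx
    · apply Differentiable.differentiableOn
      fun_prop
  refine ⟨part1, part2, part3, by rw [hTf0]; norm_num, by rw [hTf1]; norm_num, ?_, ?_⟩
  · rw [hg 0, hTf0, hf0]; norm_num
  · rw [hg 1, hTf1, hf1]; norm_num
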